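/- arXiv:1302.4911 — 3 statements merged into one kernel-verified Lean document; each statement's English description precedes it below -/
import Mathlib

section
/- Every 2-dimensional subspace s of sl(2,ℝ) is a Lie triple system: [[s,s],s] ⊆ s. -/
open Matrix

lemma key_identity (A B C : Matrix (Fin 2) (Fin 2) ℝ)
    (hA : A.trace = 0) (hB : B.trace = 0) (hC : C.trace = 0) :
    (A * B - B * A) * C - C * (A * B - B * A)
      = (2 * (B * C).trace) • A - (2 * (A * C).trace) • B := by
  have hA' : A 1 1 = -A 0 0 := by
    have := hA; rw [Matrix.trace_fin_two] at this; linarith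
  have hB' : B 1 1 = -B 0 0 := by
    have := hB; rw [Matrix.trace_fin_two] at this; linarith
  have hC' : C 1 1 = -C 0 0 := by
    have := hC; rw [Matrix.trace_fin_two] at this; linarith
  ext i j
  fin_cases i <;> fin_cases j <;>
    simp [Matrix.mul_apply, Matrix.trace_fin_two, Fin.sum_univ_two, hA', hB', hC'] <;>
    ring

/-- Every 2-dimensional subspace `s` of `sl(2,ℝ)` is a Lie triple system: `[[s,s],s] ⊆ s`. -/
theorem two_dim_subspace_lie_triple
    (s : Submodule ℝ (Matrix (Fin 2) (Fin 2) ℝ))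
    (hsl : ∀ A ∈ s, A.trace = 0)
    (hdim : Module.finrank ℝ s = 2) :
    ∀ A ∈ s, ∀ B ∈ s, ∀ C ∈ s,
      (A * B - B * A) * C - C * (A * B - B * A) ∈ s := by
  intro A hA B hB C hC
  rw [key_identity A B C (hsl A hA) (hsl B hB) (hsl C hC)]
  exact s.sub_mem (s.smul_mem _ hA) (s.smul_mem _ hB)
end

section
/- The map Ψ : SL(2,ℝ) → ℝP⁴ sending [[a,b],[c,d]] to the projective point [a-d : b+c : b-c : a+d-2 : a+d+2] is well-defined (the image vector is never zero), lands in the projectivized null cone of the quadratic form Q(X,Y,Z,U,V) = X² + Y² - Z² - UV, and is injective. -/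
open Matrix

/-- The map `Ψ` in homogeneous coordinates:
`[[a,b],[c,d]] ↦ (a-d, b+c, b-c, a+d-2, a+d+2)`. -/
def psiVec (M : Matrix (Fin 2) (Fin 2) ℝ) : Fin 5 → ℝ :=
  ![M 0 0 - M 1 1, M 0 1 + M 1 0, M 0 1 - M 1 0, M 0 0 + M 1 1 - 2, M 0 0 + M 1 1 + 2]

/-- The quadratic form `Q(X,Y,Z,U,V) = X² + Y² - Z² - UV` of signature `(3,2)`. -/
def einQ (v : Fin 5 → ℝ) : ℝ := v 0 ^ 2 + v 1 ^ 2 - v 2 ^ 2 - v 3 * v 4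

/-- `Ψ : SL(2,ℝ) → ℝP⁴` is well defined (the image vector is never zero), lands in the
projectivized null cone of `Q`, and is injective as a map to projective space. -/
theorem psi_well_defined_null_injective :
    (∀ M : Matrix (Fin 2) (Fin 2) ℝ, M.det = 1 → psiVec M ≠ 0 ∧ einQ (psiVec M) = 0) ∧
    (∀ M N : Matrix (Fin 2) (Fin 2) ℝ, M.det = 1 → N.det = 1 →
      (∃ c : ℝ, c ≠ 0 ∧ psiVec M = c • psiVec N) → M = N) := by
  constructor
  · intro M hM
    rw [Matrix.det_fin_two] at hM
    constructor
    · intro h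
      have h3 := congrFun h 3
      have h4 := congrFun h 4
      simp [psiVec] at h3 h4
      linarith
    · simp only [einQ, psiVec, Matrix.cons_val_zero, Matrix.cons_val_one, Matrix.head_cons,
        Matrix.cons_val_two, Matrix.cons_val_three, Matrix.cons_val_four, Matrix.tail_cons]
      nlinarith [hM]
  · intro M N hM hN ⟨c, hc, h⟩
    rw [Matrix.det_fin_two] at hM hN
    have h0 := congrFun h 0
    have h1 := congrFun h 1
    have h2 := congrFun h 2
    have h3 := congrFun h 3
    have h4 := congrFun h 4
    simp [psiVec] at h0 h1 h2 h3 h4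
    have hc1 : c = 1 := by nlinarith [h3, h4]
    subst hc1
    ext i j
    fin_cases i <;> fin_cases j <;> simp <;> linarith
end

section
/- A point [X:Y:Z:U:V] on the projectivized null cone of Q(X,Y,Z,U,V) = X² + Y² - Z² - UV with U ≠ V lies in the image of Ψ : SL(2,ℝ) → Ein³; explicitly, the matrix with entries a = (2X+U+V)/(V-U), b = 2(Y+Z)/(V-U), c = 2(Y-Z)/(V-U), d = (-2X+U+V)/(V-U) has determinant 1 and maps to [X:Y:Z:U:V] under Ψ. -/
open Matrix

/-- Any point `[X:Y:Z:U:V]` of the projectivized null cone of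
`Q = X² + Y² - Z² - UV` with `U ≠ V` lies in the image of `Ψ`, via the explicit matrix
with entries `a = (2X+U+V)/(V-U)`, `b = 2(Y+Z)/(V-U)`, `c = 2(Y-Z)/(V-U)`,
`d = (-2X+U+V)/(V-U)`, which has determinant `1`. -/
theorem psi_surjective_off_fixed_set
    (X Y Z U V : ℝ)
    (hvec : ![X, Y, Z, U, V] ≠ 0)
    (hQ : X ^ 2 + Y ^ 2 - Z ^ 2 - U * V = 0)
    (hUV : U ≠ V) :
    (!![(2 * X + U + V) / (V - U), 2 * (Y + Z) / (V - U);
        2 * (Y - Z) / (V - U), (-2 * X + U + V) / (V - U)]).det = 1 ∧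
    ∃ c : ℝ, c ≠ 0 ∧
      psiVec !![(2 * X + U + V) / (V - U), 2 * (Y + Z) / (V - U);
                2 * (Y - Z) / (V - U), (-2 * X + U + V) / (V - U)] = c • ![X, Y, Z, U, V] := by
  have hne : V - U ≠ 0 := sub_ne_zero.mpr (Ne.symm hUV)
  constructor
  · rw [Matrix.det_fin_two_of]
    field_simp
    nlinarith [hQ, sq_nonneg (V - U)]
  · refine ⟨4 / (V - U), div_ne_zero (by norm_num) hne, ?_⟩
    · funext i
      fin_cases i <;>
        simp [psiVec, Matrix.of_apply] <;> field_simp <;> ring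
end
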